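/- Let G be a torsion group, i.e. a group in which every element has finite order. Then for every finite alphabet X, every language L ⊆ X* with L ∈ VA(G) has semilinear Parikh image Ψ(L). -/

import Mathlib

namespace Paper

/-- `VA M L`: the language `L ⊆ X*` is accepted by a valence automaton over the monoid `M`,
via the standard characterization: there are a finite alphabet `Y`, a regular language
`R ⊆ Y*`, and monoid homomorphisms `φ : Y* → M`, `h : Y* → X*` with `L = h(R ∩ φ⁻¹(1))`. -/
def VA (M : Type*) [Monoid M] {X : Type} (L : Language X) : Prop :=
  ∃ (Y : Type) (_ : Fintype Y) (R : Language Y)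
    (φ : FreeMonoid Y →* M) (h : FreeMonoid Y →* FreeMonoid X),
    R.IsRegular ∧
      L = (fun w => FreeMonoid.toList (h w)) ''
            {w : FreeMonoid Y | FreeMonoid.toList w ∈ R ∧ φ w = 1}

open Classical in
/-- The Parikh image of a word: the multiset counting occurrences of each letter. -/
noncomputable def parikh {X : Type} (w : List X) : X → ℕ := fun x => w.count x

/-- A linear subset of `X^⊕`. -/
def IsLinearSet {X : Type} (S : Set (X → ℕ)) : Prop :=
  ∃ (α₀ : X → ℕ) (n : ℕ) (α : Fin n → X → ℕ),
    S = {β | ∃ m : Fin n → ℕ, β = α₀ + ∑ i, m i • α i}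

/-- A semilinear subset of `X^⊕`: a finite union of linear sets. -/
def IsSemilinearSet {X : Type} (S : Set (X → ℕ)) : Prop :=
  ∃ (n : ℕ) (T : Fin n → Set (X → ℕ)), (∀ i, IsLinearSet (T i)) ∧ S = ⋃ i, T i

/-- A language is semilinear if its Parikh image is a semilinear set. -/
def LangSemilinear {X : Type} (L : Language X) : Prop := IsSemilinearSet (parikh '' L)

/-! ### Basic closure properties of semilinear sets -/

lemma IsLinearSet.isSemilinearSet {X : Type} {S : Set (X → ℕ)} (h : IsLinearSet S) :
    IsSemilinearSet S :=
  ⟨1, fun _ => S, fun _ => h, (Set.iUnion_const S).symm⟩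

lemma isSemilinearSet_empty {X : Type} : IsSemilinearSet (∅ : Set (X → ℕ)) :=
  ⟨0, fun i => i.elim0, fun i => i.elim0, by simp⟩

lemma IsSemilinearSet.union {X : Type} {S T : Set (X → ℕ)} (hS : IsSemilinearSet S)
    (hT : IsSemilinearSet T) : IsSemilinearSet (S ∪ T) := by
  obtain ⟨n, A, hA, rfl⟩ := hS
  obtain ⟨m, B, hB, rfl⟩ := hT
  refine ⟨n + m, (Sum.elim A B) ∘ (finSumFinEquiv.symm), fun i => ?_, ?_⟩
  · rcases h : finSumFinEquiv.symm i with j | j <;>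
      simp only [Function.comp_apply, h, Sum.elim_inl, Sum.elim_inr]
    exacts [hA j, hB j]
  · rw [show (⋃ i, ((Sum.elim A B) ∘ (finSumFinEquiv.symm)) i)
        = ⋃ s, Sum.elim A B s from
      Function.Surjective.iUnion_comp (finSumFinEquiv.symm.surjective) _,
      Set.iUnion_sum]
    simp

lemma isSemilinearSet_sUnion {X : Type} (F : Set (Set (X → ℕ))) (hF : F.Finite)
    (hlin : ∀ T ∈ F, IsSemilinearSet T) : IsSemilinearSet (⋃₀ F) := by
  revert hlin
  refine Set.Finite.induction_on F hF ?_ ?_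
  · intro _
    simpa using (isSemilinearSet_empty (X := X))
  · intro T F' _ _ ih hlin
    rw [Set.sUnion_insert]
    exact (hlin T (Set.mem_insert _ _)).union
      (ih fun T' hT' => hlin T' (Set.mem_insert_of_mem _ hT'))

lemma isSemilinearSet_iUnion {X : Type} {ι : Type*} [Finite ι] (f : ι → Set (X → ℕ))
    (h : ∀ i, IsSemilinearSet (f i)) : IsSemilinearSet (⋃ i, f i) := by
  rw [← Set.sUnion_range]
  exact isSemilinearSet_sUnion _ (Set.finite_range f) (by rintro T ⟨i, rfl⟩; exact h i)

/-- Image of a semilinear set under an affine map `v ↦ b + A v`. -/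
lemma IsSemilinearSet.affine_image {X X' : Type} {S : Set (X → ℕ)} (hS : IsSemilinearSet S)
    (b : X' → ℕ) (A : (X → ℕ) →+ (X' → ℕ)) :
    IsSemilinearSet ((fun v => b + A v) '' S) := by
  obtain ⟨n, T, hT, rfl⟩ := hS
  rw [Set.image_iUnion]
  refine isSemilinearSet_iUnion _ fun i => ?_
  obtain ⟨α₀, m, α, hTi⟩ := hT i
  rw [hTi]
  refine IsLinearSet.isSemilinearSet ⟨b + A α₀, m, fun j => A (α j), ?_⟩
  ext x
  constructor
  · rintro ⟨v, ⟨c, rfl⟩, rfl⟩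
    refine ⟨c, ?_⟩
    show b + A (α₀ + ∑ i, c i • α i) = _
    simp only [map_add, map_sum, map_nsmul, add_assoc]
  · rintro ⟨c, rfl⟩
    refine ⟨α₀ + ∑ i, c i • α i, ⟨c, rfl⟩, ?_⟩
    show b + A (α₀ + ∑ i, c i • α i) = _
    simp only [map_add, map_sum, map_nsmul, add_assoc]

/-! ### Dickson's lemma: upward-closed subsets of `ι → ℕ` are semilinear -/

lemma isSemilinearSet_of_upward {ι : Type} [Finite ι] (U : Set (ι → ℕ))
    (hU : ∀ u ∈ U, ∀ v, u ≤ v → v ∈ U) : IsSemilinearSet U := by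
  classical
  cases nonempty_fintype ι
  set Mn : Set (ι → ℕ) := {u | u ∈ U ∧ ∀ v ∈ U, v ≤ u → v = u} with hMn
  have hanti : IsAntichain (· ≤ ·) Mn := by
    intro a ha b hb hne hle
    exact hne (hb.2 a ha.1 hle)
  haveI : IsWellOrder ℕ (· < ·) := inferInstance
  have hMnfin : Mn.Finite :=
    hanti.finite_of_partiallyWellOrderedOn (Set.isPWO_of_wellQuasiOrderedLE Mn)
  have cover : ∀ u ∈ U, ∃ m ∈ Mn, m ≤ u := by
    have key : ∀ N u, u ∈ U → (∑ i, u i) = N → ∃ m ∈ Mn, m ≤ u := by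
      intro N
      induction N using Nat.strong_induction_on with
      | _ N ih =>
        intro u hu hN
        by_cases hm : ∀ v ∈ U, v ≤ u → v = u
        · exact ⟨u, ⟨hu, hm⟩, le_refl u⟩
        · push_neg at hm
          obtain ⟨v, hv, hvle, hvne⟩ := hm
          have hlt : (∑ i, v i) < ∑ i, u i := by
            obtain ⟨i, hi⟩ : ∃ i, v i ≠ u i := by
              by_contra hco; push_neg at hco; exact hvne (funext hco)
            exact Finset.sum_lt_sum (fun j _ => hvle j)
              ⟨i, Finset.mem_univ i, lt_of_le_of_ne (hvle i) hi⟩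
          obtain ⟨m, hm, hmle⟩ := ih _ (hN ▸ hlt) v hv rfl
          exact ⟨m, hm, hmle.trans hvle⟩
    exact fun u hu => key _ u hu rfl
  have hUeq : U = ⋃₀ ((fun m : ι → ℕ => {v | m ≤ v}) '' Mn) := by
    ext v
    simp only [Set.mem_sUnion, Set.mem_image]
    constructor
    · intro hv
      obtain ⟨m, hm, hle⟩ := cover v hv
      exact ⟨_, ⟨m, hm, rfl⟩, hle⟩
    · rintro ⟨_, ⟨m, hm, rfl⟩, hle⟩
      exact hU m hm.1 v hle
  rw [hUeq]
  refine isSemilinearSet_sUnion _ (hMnfin.image _) ?_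
  rintro T ⟨m, _, rfl⟩
  refine IsLinearSet.isSemilinearSet
    ⟨m, Fintype.card ι, fun j i => if (Fintype.equivFin ι) i = j then 1 else 0, ?_⟩
  ext v
  constructor
  · intro hv
    refine ⟨fun j => v ((Fintype.equivFin ι).symm j) - m ((Fintype.equivFin ι).symm j),
      funext fun i => ?_⟩
    have hcalc : (∑ j : Fin (Fintype.card ι),
        (fun j => v ((Fintype.equivFin ι).symm j) - m ((Fintype.equivFin ι).symm j)) j •
          (fun j i => if (Fintype.equivFin ι) i = j then (1 : ℕ) else 0) j) i
        = v i - m i := by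
      rw [Finset.sum_apply]
      have hterm : ∀ j ∈ Finset.univ,
          ((fun j => v ((Fintype.equivFin ι).symm j) - m ((Fintype.equivFin ι).symm j)) j •
            (fun j i => if (Fintype.equivFin ι) i = j then (1 : ℕ) else 0) j) i
          = if (Fintype.equivFin ι) i = j then
              v ((Fintype.equivFin ι).symm j) - m ((Fintype.equivFin ι).symm j) else 0 := by
        intro j _
        simp [mul_ite]
      rw [Finset.sum_congr rfl hterm, Finset.sum_ite_eq]
      simp
    rw [Pi.add_apply, hcalc]
    exact (Nat.add_sub_cancel' (hv i)).symm
  · rintro ⟨c, rfl⟩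
    intro i
    simp only [Pi.add_apply]
    exact Nat.le_add_right _ _

/-! ### DFA run machinery -/

variable {Y σ : Type}

/-- The list of (state, letter) pairs along the run of a DFA on a word. -/
def pairs (M : DFA Y σ) : σ → List Y → List (σ × Y)
  | _, [] => []
  | q, y :: t => (q, y) :: pairs M (M.step q y) t

/-- The transition-count vector of the run of `M` on `w` starting from `q`. -/
noncomputable def cnt (M : DFA Y σ) (q : σ) (w : List Y) : σ × Y → ℕ :=
  parikh (pairs M q w)

/-- `rep n z` is the word `z^n`. -/
def rep {α : Type} : ℕ → List α → List α
  | 0, _ => []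
  | n + 1, z => z ++ rep n z

lemma evalFrom_cons (M : DFA Y σ) (q : σ) (y : Y) (t : List Y) :
    M.evalFrom q (y :: t) = M.evalFrom (M.step q y) t := rfl

lemma pairs_append (M : DFA Y σ) (u : List Y) :
    ∀ (q : σ) (v : List Y),
      pairs M q (u ++ v) = pairs M q u ++ pairs M (M.evalFrom q u) v := by
  induction u with
  | nil => intro q v; simp [pairs, DFA.evalFrom]
  | cons y t ih =>
    intro q v
    show (q, y) :: pairs M (M.step q y) (t ++ v)
      = ((q, y) :: pairs M (M.step q y) t) ++ pairs M (M.evalFrom (M.step q y) t) v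
    rw [ih]
    rfl

lemma parikh_append {α : Type} (a b : List α) : parikh (a ++ b) = parikh a + parikh b := by
  funext x
  simp [parikh, List.count_append]

lemma parikh_pos_iff_mem {α : Type} (a : α) (l : List α) : 0 < parikh l a ↔ a ∈ l := by
  classical
  unfold parikh
  exact List.count_pos_iff

lemma parikh_nil {α : Type} (a : α) : parikh ([] : List α) a = 0 := by
  unfold parikh; simp

open Classical in
lemma parikh_cons {α : Type} (a b : α) (l : List α) :
    parikh (b :: l) a = parikh l a + if a = b then 1 else 0 := by
  classical
  unfold parikh
  rw [List.count_cons]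
  by_cases h : a = b
  · simp [h]
  · simp [h, Ne.symm h]

lemma cnt_append (M : DFA Y σ) (q : σ) (u v : List Y) :
    cnt M q (u ++ v) = cnt M q u + cnt M (M.evalFrom q u) v := by
  simp [cnt, pairs_append, parikh_append]

lemma evalFrom_rep (M : DFA Y σ) {s : σ} {z : List Y} (hz : M.evalFrom s z = s) (n : ℕ) :
    M.evalFrom s (rep n z) = s := by
  induction n with
  | zero => simp [rep, DFA.evalFrom]
  | succ n ih => rw [rep, DFA.evalFrom_of_append, hz, ih]

lemma cnt_rep (M : DFA Y σ) {s : σ} {z : List Y} (hz : M.evalFrom s z = s) (n : ℕ) :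
    cnt M s (rep n z) = n • cnt M s z := by
  induction n with
  | zero => funext p; simp [rep, cnt, pairs, parikh]
  | succ n ih => rw [rep, cnt_append, hz, ih, succ_nsmul, add_comm]

lemma ofList_rep {G : Type*} [Monoid G] (φ : FreeMonoid Y →* G) (z : List Y) (n : ℕ) :
    φ (FreeMonoid.ofList (rep n z)) = (φ (FreeMonoid.ofList z)) ^ n := by
  induction n with
  | zero => simp [rep]
  | succ n ih =>
    rw [rep, FreeMonoid.ofList_append, map_mul, ih, ← pow_succ']

lemma pairs_split (M : DFA Y σ) (p : σ × Y) :
    ∀ (w : List Y) (q : σ), p ∈ pairs M q w →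
      ∃ u x, w = u ++ x ∧ M.evalFrom q u = p.1 := by
  intro w
  induction w with
  | nil => intro q hq; simp [pairs] at hq
  | cons y t ih =>
    intro q hq
    rw [pairs, List.mem_cons] at hq
    rcases hq with hq | hq
    · exact ⟨[], y :: t, rfl, by simp [DFA.evalFrom, hq]⟩
    · obtain ⟨u, x, rfl, hev⟩ := ih (M.step q y) hq
      exact ⟨y :: u, x, rfl, by rw [evalFrom_cons]; exact hev⟩

/-- Decomposition: the count vector of any run equals that of a short word plus count
vectors of short loops. -/
lemma decomp (M : DFA Y σ) [Fintype σ] (q : σ) (w : List Y) :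
    ∃ (w₀ : List Y) (ls : List (σ × List Y)),
      w₀.length ≤ Fintype.card σ ∧
      (∀ p ∈ ls, p.2 ≠ [] ∧ p.2.length ≤ Fintype.card σ ∧ M.evalFrom p.1 p.2 = p.1) ∧
      cnt M q w = cnt M q w₀ + (ls.map fun p => cnt M p.1 p.2).sum := by
  set N := Fintype.card σ with hN
  suffices H : ∀ (n : ℕ) (w : List Y), w.length ≤ n →
      ∃ (w₀ : List Y) (ls : List (σ × List Y)),
        w₀.length ≤ N ∧
        (∀ p ∈ ls, p.2 ≠ [] ∧ p.2.length ≤ N ∧ M.evalFrom p.1 p.2 = p.1) ∧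
        cnt M q w = cnt M q w₀ + (ls.map fun p => cnt M p.1 p.2).sum by
    exact H w.length w le_rfl
  intro n
  induction n with
  | zero =>
    intro w hw
    refine ⟨w, [], ?_, by simp, by simp⟩
    omega
  | succ n ih =>
    intro w hw
    by_cases hshort : w.length ≤ N
    · exact ⟨w, [], hshort, by simp, by simp⟩
    · push_neg at hshort
      -- pigeonhole on the first N+1 run states
      obtain ⟨i, j, hne, heq⟩ := Fintype.exists_ne_map_eq_of_card_lt
        (fun i : Fin (N + 1) => M.evalFrom q (w.take i)) (by simp [hN])
      obtain ⟨a, b, hab, hba⟩ : ∃ a b : ℕ, a < b ∧ b ≤ N ∧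
          M.evalFrom q (w.take a) = M.evalFrom q (w.take b) := by
        rcases lt_or_gt_of_ne hne with hlt | hlt
        · exact ⟨i, j, hlt, by omega, heq⟩
        · exact ⟨j, i, hlt, by omega, heq.symm⟩
      obtain ⟨hbN, heval⟩ := hba
      set u := w.take a with hu
      set z := (w.drop a).take (b - a) with hz
      set x := (w.drop a).drop (b - a) with hx
      have hbw : b ≤ w.length := by omega
      have hweq : w = u ++ (z ++ x) := by
        rw [hu, hz, hx, List.take_append_drop, List.take_append_drop]
      have htb : w.take b = u ++ z := by
        rw [hu, hz, ← List.take_add]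
        congr 1
        omega
      have hzlen : z.length = b - a := by
        rw [hz, List.length_take, List.length_drop]
        omega
      have hzne : z ≠ [] := by
        intro hznil
        have h0 : z.length = 0 := by rw [hznil]; rfl
        omega
      have hs : M.evalFrom (M.evalFrom q u) z = M.evalFrom q u := by
        rw [← DFA.evalFrom_of_append, ← htb, ← heval, hu]
      -- the shorter word
      have hulen : u.length = a := by
        rw [hu, List.length_take]; omega
      have hxlen : x.length = w.length - b := by
        rw [hx, List.length_drop, List.length_drop]; omega
      have hlen' : (u ++ x).length ≤ n := by
        rw [List.length_append, hulen, hxlen]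
        omega
      obtain ⟨w₀, ls, hw₀, hls, hcnt⟩ := ih (u ++ x) hlen'
      refine ⟨w₀, (M.evalFrom q u, z) :: ls, hw₀, ?_, ?_⟩
      · intro p hp
        rcases List.mem_cons.1 hp with rfl | hp
        · refine ⟨hzne, ?_, hs⟩
          show z.length ≤ N
          omega
        · exact hls p hp
      · have h1 : cnt M q w = cnt M q (u ++ x) + cnt M (M.evalFrom q u) z := by
          rw [hweq, cnt_append, cnt_append, cnt_append, hs]
          abel
        rw [h1, hcnt, List.map_cons, List.sum_cons]
        abel

/-! ### Strata data for the key lemma -/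

/-- The type of short loops of a DFA. -/
abbrev LoopP {Y σ : Type} (M : DFA Y σ) (N : ℕ) : Type :=
  {p : σ × List Y // p.2.length ≤ N ∧ p.2 ≠ [] ∧ M.evalFrom p.1 p.2 = p.1}

instance swtFinite (Y : Type) [Finite Y] (N : ℕ) : Finite {w₀ : List Y // w₀.length ≤ N} :=
  (List.finite_length_le Y N).to_subtype

instance loopPFinite {Y σ : Type} [Finite Y] [Finite σ] (M : DFA Y σ) (N : ℕ) :
    Finite (LoopP M N) := by
  haveI : Finite {z : List Y // z.length ≤ N} := (List.finite_length_le Y N).to_subtype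
  apply Finite.of_injective
    (fun l : LoopP M N => ((l.1.1 : σ), (⟨l.1.2, l.2.1⟩ : {z : List Y // z.length ≤ N})))
  intro a b hab
  have hab' : (a.1.1, (⟨a.1.2, a.2.1⟩ : {z : List Y // z.length ≤ N}))
      = (b.1.1, (⟨b.1.2, b.2.1⟩ : {z : List Y // z.length ≤ N})) := hab
  injection hab' with hx hy
  injection hy with hy'
  exact Subtype.ext (Prod.ext hx hy')

/-- The affine map describing a stratum. -/
noncomputable def affMap {Y σ : Type} (M : DFA Y σ) (N : ℕ) [Fintype (LoopP M N)]
    (dd : LoopP M N → ℕ) (w₀ : List Y) (ρ : LoopP M N → ℕ) (k : LoopP M N → ℕ) :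
    σ × Y → ℕ :=
  cnt M M.start w₀ +
    ∑ l : LoopP M N, (if ρ l = 0 then 0 else ρ l + dd l * k l) • cnt M l.1.1 l.1.2

/-- Pumping a single loop: bumping one coordinate of `k` stays within the set of
count vectors of accepted value-one words. -/
lemma aff_bump {Y σ : Type} {G : Type*} [Group G] (M : DFA Y σ) (φ : FreeMonoid Y →* G)
    (N : ℕ) [Fintype (LoopP M N)] [DecidableEq (LoopP M N)] (dd : LoopP M N → ℕ)
    (hdd_pow : ∀ l : LoopP M N, (φ (FreeMonoid.ofList l.1.2)) ^ (dd l) = 1)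
    (w₀ : List Y) (ρ : LoopP M N → ℕ) (k : LoopP M N → ℕ) (l₀ : LoopP M N)
    (w : List Y) (hacc : M.evalFrom M.start w ∈ M.accept)
    (hone : φ (FreeMonoid.ofList w) = 1)
    (hcnt : cnt M M.start w = affMap M N dd w₀ ρ k) :
    ∃ w', M.evalFrom M.start w' ∈ M.accept ∧ φ (FreeMonoid.ofList w') = 1 ∧
      cnt M M.start w' = affMap M N dd w₀ ρ (Function.update k l₀ (k l₀ + 1)) := by
  classical
  by_cases hρ : ρ l₀ = 0
  · refine ⟨w, hacc, hone, ?_⟩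
    rw [hcnt]
    unfold affMap
    congr 1
    apply Finset.sum_congr rfl
    intro l _
    by_cases hl : l = l₀
    · subst hl; rw [if_pos hρ, if_pos hρ]
    · rw [Function.update_of_ne hl]
  · have hcoefpos : 0 < (if ρ l₀ = 0 then 0 else ρ l₀ + dd l₀ * k l₀) := by
      rw [if_neg hρ]; omega
    have hge : cnt M l₀.1.1 l₀.1.2 ≤ cnt M M.start w := by
      rw [hcnt]
      intro py
      unfold affMap
      rw [Pi.add_apply, Finset.sum_apply]
      have hterm : ((if ρ l₀ = 0 then 0 else ρ l₀ + dd l₀ * k l₀) • cnt M l₀.1.1 l₀.1.2) py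
          ≤ ∑ l : LoopP M N,
            ((if ρ l = 0 then 0 else ρ l + dd l * k l) • cnt M l.1.1 l.1.2) py :=
        Finset.single_le_sum
          (f := fun l => ((if ρ l = 0 then 0 else ρ l + dd l * k l) • cnt M l.1.1 l.1.2) py)
          (fun _ _ => Nat.zero_le _) (Finset.mem_univ l₀)
      calc cnt M l₀.1.1 l₀.1.2 py
          ≤ (if ρ l₀ = 0 then 0 else ρ l₀ + dd l₀ * k l₀) * cnt M l₀.1.1 l₀.1.2 py :=
            Nat.le_mul_of_pos_left _ hcoefpos
        _ ≤ ∑ l : LoopP M N,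
              ((if ρ l = 0 then 0 else ρ l + dd l * k l) • cnt M l.1.1 l.1.2) py := by
            simpa [smul_eq_mul] using hterm
        _ ≤ cnt M M.start w₀ py + ∑ l : LoopP M N,
              ((if ρ l = 0 then 0 else ρ l + dd l * k l) • cnt M l.1.1 l.1.2) py :=
            Nat.le_add_left _ _
    obtain ⟨zh, zt, hzht⟩ := List.exists_cons_of_ne_nil l₀.2.2.1
    have hmem : (l₀.1.1, zh) ∈ pairs M M.start w := by
      have h1 : 0 < cnt M l₀.1.1 l₀.1.2 (l₀.1.1, zh) := by
        have hp : pairs M l₀.1.1 l₀.1.2 = (l₀.1.1, zh) :: pairs M (M.step l₀.1.1 zh) zt := by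
          rw [hzht]
          rfl
        show 0 < parikh (pairs M l₀.1.1 l₀.1.2) (l₀.1.1, zh)
        rw [hp, parikh_pos_iff_mem]
        exact List.mem_cons_self
      have h2 : 0 < cnt M M.start w (l₀.1.1, zh) := lt_of_lt_of_le h1 (hge _)
      exact (parikh_pos_iff_mem _ _).mp h2
    obtain ⟨u, x, hwux, hevu⟩ := pairs_split M (l₀.1.1, zh) w M.start hmem
    have hevu' : M.evalFrom M.start u = l₀.1.1 := hevu
    have hloop : M.evalFrom l₀.1.1 l₀.1.2 = l₀.1.1 := l₀.2.2.2
    have hrepev : M.evalFrom l₀.1.1 (rep (dd l₀) l₀.1.2) = l₀.1.1 := evalFrom_rep M hloop _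
    refine ⟨u ++ (rep (dd l₀) l₀.1.2 ++ x), ?_, ?_, ?_⟩
    · rw [DFA.evalFrom_of_append, DFA.evalFrom_of_append, hevu', hrepev]
      have hsame : M.evalFrom M.start w = M.evalFrom l₀.1.1 x := by
        rw [hwux, DFA.evalFrom_of_append, hevu']
      rwa [hsame] at hacc
    · have hval : φ (FreeMonoid.ofList (u ++ (rep (dd l₀) l₀.1.2 ++ x)))
          = φ (FreeMonoid.ofList u) *
            ((φ (FreeMonoid.ofList l₀.1.2)) ^ (dd l₀) * φ (FreeMonoid.ofList x)) := by
        rw [FreeMonoid.ofList_append, map_mul, FreeMonoid.ofList_append, map_mul, ofList_rep]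
      rw [hval, hdd_pow l₀, one_mul, ← map_mul, ← FreeMonoid.ofList_append, ← hwux]
      exact hone
    · have hc : cnt M M.start (u ++ (rep (dd l₀) l₀.1.2 ++ x))
          = cnt M M.start w + (dd l₀) • cnt M l₀.1.1 l₀.1.2 := by
        rw [cnt_append, hevu', cnt_append, hrepev, cnt_rep M hloop]
        have hwcnt : cnt M M.start w = cnt M M.start u + cnt M l₀.1.1 x := by
          rw [hwux, cnt_append, hevu']
        rw [hwcnt]
        abel
      rw [hc, hcnt]
      unfold affMap
      rw [add_assoc]
      congr 1
      have hsplit : ∀ l : LoopP M N,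
          (if ρ l = 0 then 0 else ρ l + dd l * (Function.update k l₀ (k l₀ + 1)) l) •
              cnt M l.1.1 l.1.2
          = (if ρ l = 0 then 0 else ρ l + dd l * k l) • cnt M l.1.1 l.1.2
            + (if l = l₀ then (dd l₀) • cnt M l₀.1.1 l₀.1.2 else 0) := by
        intro l
        by_cases hl : l = l₀
        · subst hl
          rw [if_pos rfl, if_neg hρ, if_neg hρ, Function.update_self]
          have harith : ρ l + dd l * (k l + 1) = (ρ l + dd l * k l) + dd l := by ring
          rw [harith, add_smul]
        · rw [if_neg hl, Function.update_of_ne hl, add_zero]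
      rw [Finset.sum_congr rfl fun l _ => hsplit l, Finset.sum_add_distrib, Finset.sum_ite_eq']
      simp [add_comm]

/-- Collecting a list of loop-counts into a function on `LoopP`. -/
lemma listsum {Y σ : Type} (M : DFA Y σ) (N : ℕ) [Fintype (LoopP M N)] :
    ∀ ls : List (σ × List Y),
      (∀ p ∈ ls, p.2 ≠ [] ∧ p.2.length ≤ N ∧ M.evalFrom p.1 p.2 = p.1) →
      ∃ mm : LoopP M N → ℕ,
        (ls.map fun p => cnt M p.1 p.2).sum = ∑ l : LoopP M N, mm l • cnt M l.1.1 l.1.2 := by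
  classical
  intro ls
  induction ls with
  | nil => exact fun _ => ⟨0, by simp⟩
  | cons p t ih =>
    intro hmem
    obtain ⟨mm, hmm⟩ := ih fun p hp => hmem p (List.mem_cons_of_mem _ hp)
    have hp : p.2.length ≤ N ∧ p.2 ≠ [] ∧ M.evalFrom p.1 p.2 = p.1 := by
      obtain ⟨h1, h2, h3⟩ := hmem p (List.mem_cons_self)
      exact ⟨h2, h1, h3⟩
    refine ⟨Function.update mm ⟨p, hp⟩ (mm ⟨p, hp⟩ + 1), ?_⟩
    rw [List.map_cons, List.sum_cons, hmm]
    have hsplit : ∀ l : LoopP M N,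
        Function.update mm (⟨p, hp⟩ : LoopP M N) (mm ⟨p, hp⟩ + 1) l • cnt M l.1.1 l.1.2
        = mm l • cnt M l.1.1 l.1.2 +
          (if l = (⟨p, hp⟩ : LoopP M N) then cnt M p.1 p.2 else 0) := by
      intro l
      by_cases hl : l = (⟨p, hp⟩ : LoopP M N)
      · subst hl
        rw [if_pos rfl, Function.update_self, add_smul, one_smul]
      · rw [if_neg hl, Function.update_of_ne hl, add_zero]
    rw [Finset.sum_congr rfl fun l _ => hsplit l, Finset.sum_add_distrib, Finset.sum_ite_eq']
    simp [add_comm]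

/-- Coverage: every count vector of a run lies in some stratum. -/
lemma aff_cover {Y σ : Type} [Fintype σ] (M : DFA Y σ)
    [Fintype (LoopP M (Fintype.card σ))] (dd : LoopP M (Fintype.card σ) → ℕ)
    (hdd_pos : ∀ l, 0 < dd l) (w : List Y) :
    ∃ (w₀ : List Y) (ρ k : LoopP M (Fintype.card σ) → ℕ),
      w₀.length ≤ Fintype.card σ ∧ (∀ l, ρ l ≤ dd l) ∧
      cnt M M.start w = affMap M (Fintype.card σ) dd w₀ ρ k := by
  classical
  obtain ⟨w₀, ls, hlen, hls, hdec⟩ := decomp M M.start w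
  obtain ⟨mm, hmm⟩ := listsum M (Fintype.card σ) ls hls
  refine ⟨w₀, fun l => if mm l = 0 then 0 else 1 + (mm l - 1) % dd l,
    fun l => if mm l = 0 then 0 else (mm l - 1) / dd l, hlen, ?_, ?_⟩
  · intro l
    dsimp only
    by_cases h0 : mm l = 0
    · simp [h0]
    · rw [if_neg h0]
      have h1 := Nat.mod_lt (mm l - 1) (hdd_pos l)
      omega
  · rw [hdec, hmm]
    unfold affMap
    congr 1
    apply Finset.sum_congr rfl
    intro l _
    dsimp only
    congr 1
    by_cases h0 : mm l = 0
    · rw [if_pos (by rw [if_pos h0]), h0]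
    · have hne : (if mm l = 0 then 0 else 1 + (mm l - 1) % dd l) ≠ 0 := by
        rw [if_neg h0]; omega
      rw [if_neg hne, if_neg h0, if_neg h0]
      have := Nat.mod_add_div (mm l - 1) (dd l)
      omega

/-- The key semilinearity result: count vectors of accepted value-one words form a
semilinear set. -/
lemma key {Y σ : Type} [Fintype Y] [Fintype σ] {G : Type*} [Group G]
    (hG : ∀ g : G, ∃ n : ℕ, 0 < n ∧ g ^ n = 1) (M : DFA Y σ) (φ : FreeMonoid Y →* G) :
    IsSemilinearSet {v : σ × Y → ℕ | ∃ l : List Y,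
      M.evalFrom M.start l ∈ M.accept ∧ φ (FreeMonoid.ofList l) = 1 ∧
        cnt M M.start l = v} := by
  classical
  haveI : Fintype (LoopP M (Fintype.card σ)) := Fintype.ofFinite _
  set dd : LoopP M (Fintype.card σ) → ℕ :=
    fun l => (hG (φ (FreeMonoid.ofList l.1.2))).choose with hdd_def
  have hdd_pos : ∀ l, 0 < dd l := fun l => (hG (φ (FreeMonoid.ofList l.1.2))).choose_spec.1
  have hdd_pow : ∀ l : LoopP M (Fintype.card σ),
      (φ (FreeMonoid.ofList l.1.2)) ^ (dd l) = 1 :=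
    fun l => (hG (φ (FreeMonoid.ofList l.1.2))).choose_spec.2
  set D := Finset.univ.sup dd with hD
  have hdD : ∀ l, dd l ≤ D := fun l => Finset.le_sup (Finset.mem_univ l)
  -- upward closure in each stratum
  have hupward : ∀ (j : {w₀ : List Y // w₀.length ≤ Fintype.card σ} ×
      (LoopP M (Fintype.card σ) → Fin (D + 1)))
      (k k' : LoopP M (Fintype.card σ) → ℕ), k ≤ k' →
      affMap M (Fintype.card σ) dd j.1.1 (fun l => (j.2 l : ℕ)) k ∈
        {v : σ × Y → ℕ | ∃ l : List Y, M.evalFrom M.start l ∈ M.accept ∧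
          φ (FreeMonoid.ofList l) = 1 ∧ cnt M M.start l = v} →
      affMap M (Fintype.card σ) dd j.1.1 (fun l => (j.2 l : ℕ)) k' ∈
        {v : σ × Y → ℕ | ∃ l : List Y, M.evalFrom M.start l ∈ M.accept ∧
          φ (FreeMonoid.ofList l) = 1 ∧ cnt M M.start l = v} := by
    intro j k k' hkk' hk
    have hmain : ∀ (n : ℕ) (k : LoopP M (Fintype.card σ) → ℕ), k ≤ k' →
        (∑ l : LoopP M (Fintype.card σ), (k' l - k l)) = n →
        affMap M (Fintype.card σ) dd j.1.1 (fun l => (j.2 l : ℕ)) k ∈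
          {v : σ × Y → ℕ | ∃ l : List Y, M.evalFrom M.start l ∈ M.accept ∧
            φ (FreeMonoid.ofList l) = 1 ∧ cnt M M.start l = v} →
        affMap M (Fintype.card σ) dd j.1.1 (fun l => (j.2 l : ℕ)) k' ∈
          {v : σ × Y → ℕ | ∃ l : List Y, M.evalFrom M.start l ∈ M.accept ∧
            φ (FreeMonoid.ofList l) = 1 ∧ cnt M M.start l = v} := by
      intro n
      induction n with
      | zero =>
        intro k hle hsum hk
        have hkk : k = k' := by
          funext l
          have h0 : k' l - k l = 0 :=
            (Finset.sum_eq_zero_iff).mp hsum l (Finset.mem_univ l)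
          have h1 : k l ≤ k' l := hle l
          omega
        rwa [hkk] at hk
      | succ n ih =>
        intro k hle hsum hk
        obtain ⟨l₀, hl₀⟩ : ∃ l₀, k l₀ < k' l₀ := by
          by_contra hco
          push_neg at hco
          have hz : ∀ l ∈ Finset.univ, k' l - k l = 0 := by
            intro l _
            have h1 : k' l ≤ k l := hco l
            have h2 : k l ≤ k' l := hle l
            omega
          rw [Finset.sum_congr rfl hz] at hsum
          simp at hsum
        obtain ⟨w, hacc, hone, hcnt⟩ := hk
        obtain ⟨w', h1, h2, h3⟩ := aff_bump M φ (Fintype.card σ) dd hdd_pow j.1.1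
          (fun l => (j.2 l : ℕ)) k l₀ w hacc hone hcnt
        have hle2 : Function.update k l₀ (k l₀ + 1) ≤ k' := by
          intro l
          by_cases hl : l = l₀
          · subst hl
            rw [Function.update_self]
            exact hl₀
          · rw [Function.update_of_ne hl]; exact hle l
        have hsum2 : (∑ l : LoopP M (Fintype.card σ),
            (k' l - Function.update k l₀ (k l₀ + 1) l)) = n := by
          have e1 : (∑ l : LoopP M (Fintype.card σ),
              (k' l - Function.update k l₀ (k l₀ + 1) l))
              = (∑ l ∈ Finset.univ.erase l₀, (k' l - k l)) + (k' l₀ - (k l₀ + 1)) := by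
            rw [← Finset.sum_erase_add Finset.univ _ (Finset.mem_univ l₀),
              Function.update_self]
            congr 1
            apply Finset.sum_congr rfl
            intro l hl
            rw [Function.update_of_ne (Finset.ne_of_mem_erase hl)]
          have e2 : (∑ l : LoopP M (Fintype.card σ), (k' l - k l))
              = (∑ l ∈ Finset.univ.erase l₀, (k' l - k l)) + (k' l₀ - k l₀) := by
            rw [← Finset.sum_erase_add Finset.univ _ (Finset.mem_univ l₀)]
          rw [e2] at hsum
          rw [e1]
          omega
        exact ih (Function.update k l₀ (k l₀ + 1)) hle2 hsum2 ⟨w', h1, h2, h3⟩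
    exact hmain (∑ l : LoopP M (Fintype.card σ), (k' l - k l)) k hkk' rfl hk
  -- the cover
  have hScover : {v : σ × Y → ℕ | ∃ l : List Y, M.evalFrom M.start l ∈ M.accept ∧
      φ (FreeMonoid.ofList l) = 1 ∧ cnt M M.start l = v}
      = ⋃₀ (Set.range fun j : {w₀ : List Y // w₀.length ≤ Fintype.card σ} ×
          (LoopP M (Fintype.card σ) → Fin (D + 1)) =>
          (fun k => affMap M (Fintype.card σ) dd j.1.1 (fun l => (j.2 l : ℕ)) k) ''
            {k | affMap M (Fintype.card σ) dd j.1.1 (fun l => (j.2 l : ℕ)) k ∈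
              {v : σ × Y → ℕ | ∃ l : List Y, M.evalFrom M.start l ∈ M.accept ∧
                φ (FreeMonoid.ofList l) = 1 ∧ cnt M M.start l = v}}) := by
    apply Set.Subset.antisymm
    · intro v hv
      obtain ⟨w, hacc, hone, hcnt⟩ := hv
      obtain ⟨w₀, ρ, k, hlen, hbound, haff⟩ := aff_cover M dd hdd_pos w
      have hρfin : ∀ l, ρ l < D + 1 := by
        intro l
        have hb1 := hbound l
        have hb2 := hdD l
        omega
      refine ⟨_, ⟨((⟨w₀, hlen⟩, fun l => (⟨ρ l, hρfin l⟩ : Fin (D + 1)))), rfl⟩, ?_⟩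
      refine ⟨k, ?_, ?_⟩
      · exact ⟨w, hacc, hone, haff⟩
      · exact haff.symm.trans hcnt
    · rintro v ⟨Tset, ⟨j, rfl⟩, k, hkmem, rfl⟩
      exact hkmem
  rw [hScover]
  refine isSemilinearSet_sUnion _ (Set.finite_range _) ?_
  rintro T ⟨j, rfl⟩
  show IsSemilinearSet
    ((fun k => affMap M (Fintype.card σ) dd j.1.1 (fun l => (j.2 l : ℕ)) k) ''
      {k | affMap M (Fintype.card σ) dd j.1.1 (fun l => (j.2 l : ℕ)) k ∈
        {v : σ × Y → ℕ | ∃ l : List Y, M.evalFrom M.start l ∈ M.accept ∧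
          φ (FreeMonoid.ofList l) = 1 ∧ cnt M M.start l = v}})
  -- affine presentation of the stratum map
  set ρj : LoopP M (Fintype.card σ) → ℕ := fun l => (j.2 l : ℕ) with hρj
  set A : (LoopP M (Fintype.card σ) → ℕ) →+ ((σ × Y) → ℕ) :=
    { toFun := fun k => ∑ l : LoopP M (Fintype.card σ),
        (if ρj l = 0 then 0 else dd l * k l) • cnt M l.1.1 l.1.2,
      map_zero' := by
        exact Finset.sum_eq_zero fun l _ => by
          by_cases hcase : ρj l = 0 <;> simp [hcase],
      map_add' := fun k₁ k₂ => by
        rw [← Finset.sum_add_distrib]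
        apply Finset.sum_congr rfl
        intro l _
        by_cases hcase : ρj l = 0
        · simp [hcase]
        · rw [if_neg hcase, if_neg hcase, if_neg hcase, Pi.add_apply, Nat.mul_add, add_smul] }
    with hA
  set b : (σ × Y) → ℕ := cnt M M.start j.1.1 + ∑ l : LoopP M (Fintype.card σ),
    (if ρj l = 0 then 0 else ρj l) • cnt M l.1.1 l.1.2 with hb
  have haffeq : ∀ k, affMap M (Fintype.card σ) dd j.1.1 ρj k = b + A k := by
    intro k
    show affMap M (Fintype.card σ) dd j.1.1 ρj k
      = b + ∑ l : LoopP M (Fintype.card σ),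
          (if ρj l = 0 then 0 else dd l * k l) • cnt M l.1.1 l.1.2
    rw [hb]
    unfold affMap
    rw [add_assoc, ← Finset.sum_add_distrib]
    congr 1
    apply Finset.sum_congr rfl
    intro l _
    by_cases hcase : ρj l = 0
    · simp [hcase]
    · rw [if_neg hcase, if_neg hcase, if_neg hcase, ← add_smul]
  have himg : (fun k => affMap M (Fintype.card σ) dd j.1.1 ρj k) ''
      {k | affMap M (Fintype.card σ) dd j.1.1 ρj k ∈
        {v : σ × Y → ℕ | ∃ l : List Y, M.evalFrom M.start l ∈ M.accept ∧
          φ (FreeMonoid.ofList l) = 1 ∧ cnt M M.start l = v}}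
      = (fun k => b + A k) ''
      {k | affMap M (Fintype.card σ) dd j.1.1 ρj k ∈
        {v : σ × Y → ℕ | ∃ l : List Y, M.evalFrom M.start l ∈ M.accept ∧
          φ (FreeMonoid.ofList l) = 1 ∧ cnt M M.start l = v}} := by
    apply Set.image_congr
    intro k _
    exact haffeq k
  rw [himg]
  refine IsSemilinearSet.affine_image ?_ b A
  apply isSemilinearSet_of_upward
  intro u hu v huv
  exact hupward j u v huv hu

/-- The additive map sending transition counts to the Parikh image of the image word. -/
noncomputable def theta {X Y σ : Type} [Fintype Y] [Fintype σ]
    (h : FreeMonoid Y →* FreeMonoid X) : ((σ × Y) → ℕ) →+ (X → ℕ) where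
  toFun v := fun x => ∑ p : σ × Y, v p * parikh (FreeMonoid.toList (h (FreeMonoid.of p.2))) x
  map_zero' := by funext x; simp
  map_add' a b := by
    funext x
    simp [Pi.add_apply, add_mul, Finset.sum_add_distrib]

lemma theta_single {X Y σ : Type} [Fintype Y] [Fintype σ]
    (h : FreeMonoid Y →* FreeMonoid X) (q : σ) (y : Y) :
    theta (σ := σ) h (parikh [(q, y)]) = parikh (FreeMonoid.toList (h (FreeMonoid.of y))) := by
  classical
  funext x
  show (∑ p : σ × Y, parikh [(q, y)] p * parikh (FreeMonoid.toList (h (FreeMonoid.of p.2))) x)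
    = _
  rw [Finset.sum_eq_single (q, y)]
  · have h1 : parikh [(q, y)] (q, y) = 1 := by
      rw [show ([(q, y)]) = (q, y) :: ([] : List (σ × Y)) from rfl, parikh_cons, parikh_nil,
        zero_add, if_pos rfl]
    rw [h1, one_mul]
  · intro p _ hp
    have h0 : parikh [(q, y)] p = 0 := by
      rw [show ([(q, y)]) = (q, y) :: ([] : List (σ × Y)) from rfl, parikh_cons, parikh_nil,
        zero_add, if_neg hp]
    rw [h0, zero_mul]
  · intro hmem
    exact absurd (Finset.mem_univ _) hmem

lemma theta_cnt {X Y σ : Type} [Fintype Y] [Fintype σ] (h : FreeMonoid Y →* FreeMonoid X)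
    (M : DFA Y σ) : ∀ (w : List Y) (q : σ),
    parikh (FreeMonoid.toList (h (FreeMonoid.ofList w))) = theta (σ := σ) h (cnt M q w) := by
  intro w
  induction w with
  | nil =>
    intro q
    rw [show FreeMonoid.ofList ([] : List Y) = 1 from rfl, map_one]
    have h0 : cnt M q [] = 0 := by
      funext p
      show parikh (pairs M q []) p = 0
      rw [show pairs M q [] = [] from rfl, parikh_nil]
    rw [h0, map_zero]
    funext x
    rw [show FreeMonoid.toList (1 : FreeMonoid X) = [] from rfl, parikh_nil]
    rfl
  | cons y t ih =>
    intro q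
    rw [FreeMonoid.ofList_cons, map_mul, FreeMonoid.toList_mul, parikh_append,
      ih (M.step q y)]
    have hcnt : cnt M q (y :: t) = parikh [(q, y)] + cnt M (M.step q y) t := by
      funext p
      show parikh (pairs M q (y :: t)) p = parikh [(q, y)] p + parikh (pairs M (M.step q y) t) p
      rw [show pairs M q (y :: t) = (q, y) :: pairs M (M.step q y) t from rfl, parikh_cons,
        show ([(q, y)]) = (q, y) :: ([] : List (σ × Y)) from rfl, parikh_cons, parikh_nil,
        zero_add]
      omega
    rw [hcnt, map_add, theta_single]

open Classical in
/-- For every torsion group `G`, every language in `VA G` has a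
semilinear Parikh image. -/
theorem stmt17 (G : Type*) [Group G] (hG : ∀ g : G, ∃ n : ℕ, 0 < n ∧ g ^ n = 1)
    (X : Type) [Fintype X] (L : Language X) (hL : VA G L) :
    LangSemilinear L := by
  classical
  obtain ⟨Y, hYfin, R, φ, h, hreg, hLeq⟩ := hL
  obtain ⟨σ, hσfin, M, hM⟩ := hreg
  haveI := hYfin
  haveI := hσfin
  have himg : parikh '' L = (fun v => (0 : X → ℕ) + theta (σ := σ) h v) ''
      {v : σ × Y → ℕ | ∃ l : List Y,
        M.evalFrom M.start l ∈ M.accept ∧ φ (FreeMonoid.ofList l) = 1 ∧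
          cnt M M.start l = v} := by
    subst hLeq
    apply Set.Subset.antisymm
    · rintro f ⟨xw, ⟨w, ⟨hwR, hw1⟩, rfl⟩, rfl⟩
      refine ⟨cnt M M.start (FreeMonoid.toList w), ⟨FreeMonoid.toList w, ?_, ?_, rfl⟩, ?_⟩
      · rw [← hM] at hwR
        exact (DFA.mem_accepts M).mp hwR
      · rw [show FreeMonoid.ofList (FreeMonoid.toList w) = w from FreeMonoid.ofList_toList w]
        exact hw1
      · show (0 : X → ℕ) + theta (σ := σ) h (cnt M M.start (FreeMonoid.toList w))
            = parikh (FreeMonoid.toList (h w))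
        rw [zero_add]
        have := theta_cnt h M (FreeMonoid.toList w) M.start
        rw [show FreeMonoid.ofList (FreeMonoid.toList w) = w from FreeMonoid.ofList_toList w]
          at this
        exact this.symm
    · rintro f ⟨v, ⟨l, hacc, h1, rfl⟩, rfl⟩
      refine ⟨FreeMonoid.toList (h (FreeMonoid.ofList l)),
        ⟨FreeMonoid.ofList l, ⟨?_, h1⟩, rfl⟩, ?_⟩
      · rw [← hM]
        exact (DFA.mem_accepts M).mpr hacc
      · show parikh (FreeMonoid.toList (h (FreeMonoid.ofList l)))
            = (0 : X → ℕ) + theta (σ := σ) h (cnt M M.start l)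
        rw [zero_add]
        exact theta_cnt h M l M.start
  rw [LangSemilinear, himg]
  exact (key hG M φ).affine_image 0 (theta (σ := σ) h)


end Paper
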